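/- Let k be a finite field of cardinality p^f and let S = k[[u]] be equipped with the Frobenius ring endomorphism φ sending u to u^p and acting as x ↦ x^p on k. For any nonzero finite-length S-module N, the base change φ*(N) = S ⊗_{φ,S} N has strictly greater length as a Z_p-module (equivalently, strictly greater dimension as an F_p-vector space) than N. -/

import Mathlib

open PowerSeries

/-- The ring `S = k⟦u⟧` viewed as an algebra over itself via a ring endomorphism
`φ` (so that `S ⊗[φ,S] N` is the Frobenius base change `φ*(N)`). -/
def FrobTwist (k : Type*) [Field k]
    (_φ : PowerSeries k →+* PowerSeries k) : Type _ := PowerSeries k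

noncomputable instance (k : Type*) [Field k] (φ : PowerSeries k →+* PowerSeries k) :
    CommRing (FrobTwist k φ) := inferInstanceAs (CommRing (PowerSeries k))

noncomputable instance (k : Type*) [Field k] (φ : PowerSeries k →+* PowerSeries k) :
    Algebra (PowerSeries k) (FrobTwist k φ) :=
  RingHom.toAlgebra (show PowerSeries k →+* FrobTwist k φ from φ)

section Aux

variable (p : ℕ) [hp : Fact p.Prime] (k : Type) [Field k] [CharP k p]
variable (φ : PowerSeries k →+* PowerSeries k)

/-- Coefficients of `φ` applied to a polynomial. -/
lemma coeff_phi_poly (hφX : φ PowerSeries.X = PowerSeries.X ^ p)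
    (hφC : ∀ a : k, φ (PowerSeries.C a) = PowerSeries.C (a ^ p))
    (P : Polynomial k) (m : ℕ) :
    coeff m (φ (P : PowerSeries k)) = if p ∣ m then (P.coeff (m / p)) ^ p else 0 := by
  have hp0 : 0 < p := hp.out.pos
  induction P using Polynomial.induction_on' with
  | add f g hf hg =>
    rw [Polynomial.coe_add, map_add, map_add, hf, hg, Polynomial.coeff_add]
    split_ifs with h
    · rw [add_pow_char]
    · rw [add_zero]
  | monomial n a =>
    have h1 : ((Polynomial.monomial n a : Polynomial k) : PowerSeries k)
        = PowerSeries.C a * PowerSeries.X ^ n := by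
      rw [Polynomial.coe_monomial]
      ext j
      simp [PowerSeries.coeff_monomial, PowerSeries.coeff_X_pow, PowerSeries.coeff_C_mul]
    rw [h1, map_mul, map_pow, hφX, hφC, ← pow_mul]
    simp only [PowerSeries.coeff_C_mul, PowerSeries.coeff_X_pow, mul_ite, mul_one, mul_zero,
      Polynomial.coeff_monomial]
    by_cases hd : p ∣ m
    · obtain ⟨q, rfl⟩ := hd
      rw [if_pos (Dvd.intro q rfl), Nat.mul_div_cancel_left _ hp0]
      by_cases hq : q = n
      · subst hq; simp
      · rw [if_neg (fun h => hq (Nat.eq_of_mul_eq_mul_left hp0 h)),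
          if_neg (fun h => hq h.symm), zero_pow hp.out.ne_zero]
    · rw [if_neg (fun h => hd ⟨n, h⟩), if_neg hd]

/-- Coefficients of `φ` applied to a power series. -/
lemma coeff_phi (hφX : φ PowerSeries.X = PowerSeries.X ^ p)
    (hφC : ∀ a : k, φ (PowerSeries.C a) = PowerSeries.C (a ^ p))
    (g : PowerSeries k) (m : ℕ) :
    coeff m (φ g) = if p ∣ m then (coeff (m / p) g) ^ p else 0 := by
  have hp0 : 0 < p := hp.out.pos
  -- split off the truncation at degree m+1
  have hdvd : (PowerSeries.X : PowerSeries k) ^ (m + 1)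
      ∣ (g - (trunc (m + 1) g : PowerSeries k)) := by
    rw [PowerSeries.X_pow_dvd_iff]
    intro j hj
    rw [map_sub, Polynomial.coeff_coe, PowerSeries.coeff_trunc, if_pos hj, sub_self]
  obtain ⟨h, hh⟩ := hdvd
  have key : φ g = φ (trunc (m + 1) g : PowerSeries k)
      + (PowerSeries.X ^ p) ^ (m + 1) * φ h := by
    have h2 := congrArg φ hh
    rw [map_sub, map_mul, map_pow, hφX] at h2
    linear_combination h2
  have hzero : coeff m ((PowerSeries.X ^ p) ^ (m + 1) * φ h : PowerSeries k) = 0 := by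
    rw [← pow_mul, mul_comm ((PowerSeries.X : PowerSeries k) ^ (p * (m + 1)))
      (φ h), PowerSeries.coeff_mul_X_pow', if_neg]
    intro hle
    have : m + 1 ≤ p * (m + 1) := Nat.le_mul_of_pos_left _ hp0
    omega
  rw [key, map_add, hzero, add_zero, coeff_phi_poly p k φ hφX hφC,
    PowerSeries.coeff_trunc, if_pos (lt_of_le_of_lt (Nat.div_le_self m p) (Nat.lt_succ_self m))]

end Aux

/-- **Lemma (strict length increase under Frobenius pullback).**
Let `k` be a finite field of characteristic `p` and `S = k⟦u⟧`, equipped with the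
Frobenius endomorphism `φ` with `φ u = u^p` and `φ a = a^p` on `k`.  For any
nonzero finite-length `S`-module `N` (equivalently, a nonzero finite `S`-module),
the base change `φ*(N) = S ⊗_{φ,S} N` has strictly greater length as a
`ℤ_p`-module (equivalently `𝔽_p`-dimension, equivalently cardinality) than `N`. -/
theorem frobenius_pullback_length_lt (p : ℕ) [Fact p.Prime]
    (k : Type) [Field k] [Finite k] [CharP k p]
    (φ : PowerSeries k →+* PowerSeries k)
    (hφX : φ PowerSeries.X = PowerSeries.X ^ p)
    (hφC : ∀ a : k, φ (PowerSeries.C a) = PowerSeries.C (a ^ p))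
    (N : Type) [AddCommGroup N] [Module (PowerSeries k) N]
    [Finite N] [Nontrivial N] :
    Nat.card N < Nat.card (TensorProduct (PowerSeries k) (FrobTwist k φ) N) := by
  have hp : p.Prime := Fact.out
  have hp0 : 0 < p := hp.pos
  set S := PowerSeries k with hS
  -- the scalar action on FrobTwist
  have hsmul : ∀ (s : S) (t : FrobTwist k φ),
      s • t = (show S →+* FrobTwist k φ from φ) s * t := by
    intro s t
    rw [Algebra.smul_def, RingHom.algebraMap_toAlgebra]
  -- the basis map
  set B : (Fin p →₀ S) →ₗ[S] FrobTwist k φ :=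
    Finsupp.lsum S (fun i : Fin p =>
      LinearMap.toSpanSingleton S (FrobTwist k φ)
        (show FrobTwist k φ from PowerSeries.X ^ (i : ℕ))) with hB
  have coeff_B : ∀ (g : Fin p →₀ S) (i : Fin p) (q : ℕ),
      coeff (R := k) (p * q + (i : ℕ)) (B g) = (coeff q (g i)) ^ p := by
    intro g i q
    have h1 : (B g : PowerSeries k)
        = (∑ j : Fin p, φ (g j) * PowerSeries.X ^ (j : ℕ) : PowerSeries k) := by
      rw [hB, Finsupp.lsum_apply, Finsupp.sum_fintype]
      · refine Finset.sum_congr rfl fun j _ => ?_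
        rw [LinearMap.toSpanSingleton_apply, hsmul]
        rfl
      · intro j
        rw [LinearMap.toSpanSingleton_apply, zero_smul]
    rw [h1, map_sum]
    rw [Finset.sum_eq_single i]
    · rw [PowerSeries.coeff_mul_X_pow', if_pos (Nat.le_add_left _ _),
        Nat.add_sub_cancel, coeff_phi p k φ hφX hφC, if_pos (Dvd.intro q rfl),
        Nat.mul_div_cancel_left _ hp0]
    · intro j _ hne
      rw [PowerSeries.coeff_mul_X_pow']
      split_ifs with hle
      · rw [coeff_phi p k φ hφX hφC, if_neg]
        intro hdvd
        apply hne
        obtain ⟨c, hc⟩ := hdvd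
        have hkey : (j : ℕ) + p * c = (i : ℕ) + p * q := by omega
        have hmod : (j : ℕ) % p = (i : ℕ) % p := by
          rw [← Nat.add_mul_mod_self_left (j : ℕ) p c, hkey,
            Nat.add_mul_mod_self_left]
        exact Fin.ext (by
          rwa [Nat.mod_eq_of_lt j.isLt, Nat.mod_eq_of_lt i.isLt] at hmod)
      · rfl
    · intro habs
      exact absurd (Finset.mem_univ _) habs
  -- B is injective
  have hinj : Function.Injective B := by
    rw [← LinearMap.ker_eq_bot, LinearMap.ker_eq_bot']
    intro g hg
    ext i q
    have h := coeff_B g i q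
    rw [hg, show (0 : FrobTwist k φ) = (0 : PowerSeries k) from rfl, map_zero] at h
    have hz : coeff q (g i) = 0 := (pow_eq_zero_iff hp.ne_zero).mp h.symm
    simp [hz]
  -- B is surjective
  have hsurj : Function.Surjective B := by
    intro f
    set ρ : k ≃+* k := (frobeniusEquiv k p).symm with hρ
    have hρp : ∀ a : k, (ρ a) ^ p = a := by
      intro a
      have h := (frobeniusEquiv k p).apply_symm_apply a
      rwa [frobeniusEquiv_apply, frobenius_def] at h
    refine ⟨Finsupp.equivFunOnFinite.symm
      (fun i : Fin p =>
        PowerSeries.mk fun q => ρ (coeff (p * q + (i : ℕ)) (f : PowerSeries k))), ?_⟩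
    refine PowerSeries.ext fun m => ?_
    have hm : m = p * (m / p) + ((⟨m % p, Nat.mod_lt _ hp0⟩ : Fin p) : ℕ) :=
      (Nat.div_add_mod m p).symm
    rw [hm, coeff_B]
    simp only [Finsupp.coe_equivFunOnFinite_symm, PowerSeries.coeff_mk]
    exact hρp _
  -- linear equivalences
  let e : (Fin p →₀ S) ≃ₗ[S] FrobTwist k φ := LinearEquiv.ofBijective B ⟨hinj, hsurj⟩
  let e2 : TensorProduct S (FrobTwist k φ) N ≃ₗ[S] TensorProduct S (Fin p →₀ S) N :=
    TensorProduct.congr e.symm (LinearEquiv.refl S N)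
  let e3 : TensorProduct S (Fin p →₀ S) N ≃ₗ[S] (Fin p →₀ N) :=
    TensorProduct.finsuppScalarLeft S N (Fin p)
  have hcard : Nat.card (TensorProduct S (FrobTwist k φ) N) = Nat.card N ^ p := by
    rw [Nat.card_congr ((e2.trans e3).toEquiv.trans Finsupp.equivFunOnFinite),
      Nat.card_fun]
    congr 1
    simp
  rw [hcard]
  have h2 : 1 < Nat.card N := Finite.one_lt_card
  calc Nat.card N = Nat.card N ^ 1 := (pow_one _).symm
    _ < Nat.card N ^ p := Nat.pow_lt_pow_right h2 hp.one_lt
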